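/- Let D : [0,∞) → ℝ be a bounded continuous function with β⁻(D) ≤ 0 ≤ β⁺(D) (so that the linear equation x' = D(t)·x has no exponential dichotomy on [0,∞)), and let v : [0,∞) → ℝ be a bounded continuous function with liminf_{t→+∞} |v(t)| > 0. Then the inhomogeneous equation x'(t) = D(t)·x(t) + v(t) has no bounded solution on [0,∞): every differentiable solution x satisfies sup_{t≥0} |x(t)| = +∞. -/

import Mathlib

open Filter Set

/-- Transition operator of the scalar linear equation `x' = D t * x`. -/
noncomputable def Phi (D : ℝ → ℝ) (t s : ℝ) : ℝ :=
  Real.exp (∫ τ in s..t, D τ)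

/-- Average of `D` over the interval from `q.1` to `q.2`. -/
noncomputable def bohlAvg (D : ℝ → ℝ) (q : ℝ × ℝ) : ℝ :=
  (q.2 - q.1)⁻¹ * ∫ τ in q.1..q.2, D τ

/-- The filter describing `t - s → +∞` with `t > s ≥ 0` for pairs `q = (s, t)`. -/
def bohlFilter : Filter (ℝ × ℝ) :=
  (Filter.atTop.comap fun q : ℝ × ℝ => q.2 - q.1) ⊓
    Filter.principal {q : ℝ × ℝ | 0 ≤ q.1 ∧ q.1 < q.2}

/-- Upper Bohl exponent of `D`. -/
noncomputable def bohlUpper (D : ℝ → ℝ) : ℝ :=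
  Filter.limsup (bohlAvg D) bohlFilter

/-- Lower Bohl exponent of `D`. -/
noncomputable def bohlLower (D : ℝ → ℝ) : ℝ :=
  Filter.liminf (bohlAvg D) bohlFilter

open MeasureTheory intervalIntegral

lemma myIntIntP {f : ℝ → ℝ} (hf : ContinuousOn f (Set.Ioi 0)) {s t : ℝ}
    (hs : 0 < s) (ht : 0 < t) : IntervalIntegrable f volume s t :=
  (hf.mono (fun u hu => lt_of_lt_of_le (lt_min hs ht) hu.1)).intervalIntegrable

lemma FTCr {f : ℝ → ℝ} (hf : ContinuousOn f (Set.Ioi 0)) {s t : ℝ}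
    (hs : 0 < s) (ht : 0 < t) :
    HasDerivAt (fun u => ∫ τ in s..u, f τ) (f t) t :=
  integral_hasDerivAt_right (myIntIntP hf hs ht)
    (ContinuousOn.stronglyMeasurableAtFilter isOpen_Ioi hf t ht)
    (hf.continuousAt (Ioi_mem_nhds ht))

lemma FTCl {f : ℝ → ℝ} (hf : ContinuousOn f (Set.Ioi 0)) {s t : ℝ}
    (hs : 0 < s) (ht : 0 < t) :
    HasDerivAt (fun u => ∫ τ in u..s, f τ) (-f t) t :=
  integral_hasDerivAt_left (myIntIntP hf ht hs)
    (ContinuousOn.stronglyMeasurableAtFilter isOpen_Ioi hf t ht)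
    (hf.continuousAt (Ioi_mem_nhds ht))

lemma Wcont {D : ℝ → ℝ} (hD : ContinuousOn D (Set.Ici 0)) :
    ContinuousOn (fun t => Real.exp (-∫ u in (1:ℝ)..t, D u)) (Set.Ioi 0) := by
  intro t ht
  exact (Real.continuous_exp.continuousAt.comp
    ((FTCr (hD.mono Ioi_subset_Ici_self) one_pos ht).continuousAt.neg)).continuousWithinAt

lemma myIntInt {D : ℝ → ℝ} (hD : ContinuousOn D (Set.Ici 0)) {s t : ℝ}
    (hs : 0 ≤ s) (ht : 0 ≤ t) : IntervalIntegrable D volume s t :=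
  (hD.mono (fun u hu => le_trans (le_min hs ht) hu.1)).intervalIntegrable

lemma myIntBound {D : ℝ → ℝ} {M s t : ℝ} (hM : ∀ u, 0 ≤ u → |D u| ≤ M)
    (hs : 0 ≤ s) (hst : s ≤ t) : |∫ τ in s..t, D τ| ≤ M * (t - s) := by
  have := intervalIntegral.norm_integral_le_of_norm_le_const
    (f := D) (a := s) (b := t) (C := M) ?_
  · simpa [abs_of_nonneg (sub_nonneg.2 hst)] using this
  · intro u hu
    rw [Set.uIoc_of_le hst] at hu
    exact hM u (le_trans hs hu.1.le)

/-- `E t - E s = ∫ s..t D` where `E t = ∫ 1..t D`. -/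
lemma Ediff {D : ℝ → ℝ} (hD : ContinuousOn D (Set.Ici 0)) {s t : ℝ}
    (hs : 0 ≤ s) (ht : 0 ≤ t) :
    (∫ u in (1:ℝ)..t, D u) - (∫ u in (1:ℝ)..s, D u) = ∫ u in s..t, D u :=
  intervalIntegral.integral_interval_sub_left (myIntInt hD zero_le_one ht)
    (myIntInt hD zero_le_one hs)

lemma gronwallA {D : ℝ → ℝ} (hD : ContinuousOn D (Set.Ici 0)) {M : ℝ}
    (hM : ∀ u, 0 ≤ u → |D u| ≤ M) {A T1 : ℝ} (hA : 1 ≤ A) (hT1 : 1 ≤ T1)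
    (hbd : ∀ s t, T1 ≤ s → s ≤ t →
      (∫ τ in s..t, Real.exp (-∫ u in (1:ℝ)..τ, D u))
        ≤ A * Real.exp (-∫ u in (1:ℝ)..t, D u)) :
    ∀ s t, T1 ≤ s → s ≤ t →
      (∫ τ in s..t, D τ) ≤ (Real.log A + M + 1/A) - (t-s)/A := by
  set E : ℝ → ℝ := fun t => ∫ u in (1:ℝ)..t, D u with hE
  set W : ℝ → ℝ := fun t => Real.exp (-E t) with hWdef
  have hA0 : (0:ℝ) < A := lt_of_lt_of_le one_pos hA
  have hlogA : 0 ≤ Real.log A := Real.log_nonneg hA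
  have hM0 : 0 ≤ M := le_trans (abs_nonneg _) (hM 0 le_rfl)
  have hWc : ContinuousOn W (Set.Ioi 0) := Wcont hD
  intro s t hs hst
  have hs0 : (0:ℝ) < s := lt_of_lt_of_le one_pos (le_trans hT1 hs)
  have ht0 : (0:ℝ) < t := lt_of_lt_of_le hs0 hst
  have hEdiff : ∀ a b : ℝ, 0 ≤ a → 0 ≤ b → E b - E a = ∫ u in a..b, D u :=
    fun a b ha hb => Ediff hD ha hb
  rw [← hEdiff s t hs0.le ht0.le]
  by_cases hts : t ≤ s + 1
  · have h1 : |∫ τ in s..t, D τ| ≤ M * (t - s) := myIntBound hM hs0.le hst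
    have h2 : E t - E s ≤ M := by
      rw [hEdiff s t hs0.le ht0.le]
      nlinarith [abs_le.1 h1, hM0]
    have h3 : (t-s)/A ≤ 1/A := by
      rw [div_le_div_iff_of_pos_right hA0]; nlinarith
    linarith
  · push_neg at hts
    set ρ : ℝ → ℝ := fun u => ∫ τ in s..u, W τ with hρdef
    set g : ℝ → ℝ := fun u => ρ u * Real.exp (-((u - s)/A)) with hgdef
    have hgderiv : ∀ u, s ≤ u → u ≤ t →
        HasDerivAt g (W u * Real.exp (-((u-s)/A))
          + ρ u * (Real.exp (-((u-s)/A)) * (-(1/A)))) u := by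
      intro u hsu hut
      have hu0 : (0:ℝ) < u := lt_of_lt_of_le hs0 hsu
      have h1 : HasDerivAt ρ (W u) u := FTCr hWc hs0 hu0
      have h2 : HasDerivAt (fun u => Real.exp (-((u - s)/A)))
          (Real.exp (-((u-s)/A)) * (-(1/A))) u := by
        have : HasDerivAt (fun u : ℝ => -((u - s)/A)) (-(1/A)) u := by
          simpa using (((hasDerivAt_id u).sub_const s).div_const A).fun_neg
        exact this.exp
      exact h1.mul h2
    have hmono : MonotoneOn g (Set.Icc s t) := by
      apply monotoneOn_of_deriv_nonneg (convex_Icc s t)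
      · intro u hu
        exact (hgderiv u hu.1 hu.2).continuousAt.continuousWithinAt
      · intro u hu
        rw [interior_Icc] at hu
        exact (hgderiv u hu.1.le hu.2.le).differentiableAt.differentiableWithinAt
      · intro u hu
        rw [interior_Icc] at hu
        rw [(hgderiv u hu.1.le hu.2.le).deriv]
        have hρbd : ρ u ≤ A * W u := hbd s u hs hu.1.le
        have he : (0:ℝ) < Real.exp (-((u-s)/A)) := Real.exp_pos _
        have hW0 : (0:ℝ) < W u := Real.exp_pos _
        have : ρ u * (1/A) ≤ W u := by
          rw [mul_one_div, div_le_iff₀ hA0]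
          linarith [hρbd]
        nlinarith
    have hg1 : g (s+1) ≤ g t :=
      hmono (Set.mem_Icc.2 ⟨by linarith, by linarith⟩)
        (Set.mem_Icc.2 ⟨by linarith, le_rfl⟩) (by linarith)
    have hρ1 : Real.exp (-E s - M) ≤ ρ (s+1) := by
      have hpt : ∀ τ ∈ Set.Icc s (s+1), Real.exp (-E s - M) ≤ W τ := by
        intro τ hτ
        have hτ0 : (0:ℝ) < τ := lt_of_lt_of_le hs0 hτ.1
        have : E τ - E s ≤ M := by
          rw [hEdiff s τ hs0.le hτ0.le]
          have := myIntBound hM hs0.le hτ.1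
          nlinarith [abs_le.1 this, hM0, hτ.2]
        rw [hWdef]
        exact Real.exp_le_exp.2 (by linarith)
      calc Real.exp (-E s - M) = ∫ τ in s..(s+1), Real.exp (-E s - M) := by simp
        _ ≤ ∫ τ in s..(s+1), W τ := by
            apply intervalIntegral.integral_mono_on (by linarith)
              intervalIntegrable_const (myIntIntP hWc hs0 (by linarith))
            exact hpt
    have hρt : ρ t ≤ A * W t := hbd s t hs hst
    have hchain : Real.exp (-E s - M) * Real.exp (-((s+1-s)/A))
        ≤ (A * W t) * Real.exp (-((t-s)/A)) := by
      calc Real.exp (-E s - M) * Real.exp (-((s+1-s)/A))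
          ≤ ρ (s+1) * Real.exp (-((s+1-s)/A)) :=
            mul_le_mul_of_nonneg_right hρ1 (Real.exp_nonneg _)
        _ = g (s+1) := rfl
        _ ≤ g t := hg1
        _ ≤ (A * W t) * Real.exp (-((t-s)/A)) :=
            mul_le_mul_of_nonneg_right hρt (Real.exp_nonneg _)
    have hexp : Real.exp (-E s - M + -((s+1-s)/A))
        ≤ Real.exp (Real.log A + -E t + -((t-s)/A)) := by
      rw [Real.exp_add, Real.exp_add, Real.exp_add, Real.exp_log hA0]
      calc Real.exp (-E s - M) * Real.exp (-((s+1-s)/A))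
          ≤ A * W t * Real.exp (-((t-s)/A)) := hchain
        _ = A * Real.exp (-E t) * Real.exp (-((t-s)/A)) := rfl
    have := Real.exp_le_exp.1 hexp
    have h4 : (s+1-s)/A = 1/A := by norm_num
    rw [h4] at this
    linarith

lemma gronwallB {D : ℝ → ℝ} (hD : ContinuousOn D (Set.Ici 0)) {M : ℝ}
    (hM : ∀ u, 0 ≤ u → |D u| ≤ M) {A T1 : ℝ} (hA : 1 ≤ A) (hT1 : 1 ≤ T1)
    (hbd : ∀ s t, T1 ≤ s → s ≤ t →
      (∫ τ in s..t, Real.exp (-∫ u in (1:ℝ)..τ, D u))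
        ≤ A * Real.exp (-∫ u in (1:ℝ)..s, D u)) :
    ∀ s t, T1 ≤ s → s ≤ t →
      (t-s)/A - (Real.log A + M + 1/A) ≤ ∫ τ in s..t, D τ := by
  set E : ℝ → ℝ := fun t => ∫ u in (1:ℝ)..t, D u with hE
  set W : ℝ → ℝ := fun t => Real.exp (-E t) with hWdef
  have hA0 : (0:ℝ) < A := lt_of_lt_of_le one_pos hA
  have hlogA : 0 ≤ Real.log A := Real.log_nonneg hA
  have hM0 : 0 ≤ M := le_trans (abs_nonneg _) (hM 0 le_rfl)
  have hWc : ContinuousOn W (Set.Ioi 0) := Wcont hD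
  intro s t hs hst
  have hs0 : (0:ℝ) < s := lt_of_lt_of_le one_pos (le_trans hT1 hs)
  have ht0 : (0:ℝ) < t := lt_of_lt_of_le hs0 hst
  have hEdiff : ∀ a b : ℝ, 0 ≤ a → 0 ≤ b → E b - E a = ∫ u in a..b, D u :=
    fun a b ha hb => Ediff hD ha hb
  rw [← hEdiff s t hs0.le ht0.le]
  by_cases hts : t ≤ s + 1
  · have h1 : |∫ τ in s..t, D τ| ≤ M * (t - s) := myIntBound hM hs0.le hst
    have h2 : -M ≤ E t - E s := by
      rw [hEdiff s t hs0.le ht0.le]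
      nlinarith [abs_le.1 h1, hM0]
    have h3 : (t-s)/A ≤ 1/A := by
      rw [div_le_div_iff_of_pos_right hA0]; nlinarith
    linarith
  · push_neg at hts
    set η : ℝ → ℝ := fun u => ∫ τ in u..t, W τ with hηdef
    set g : ℝ → ℝ := fun u => η u * Real.exp ((u - s)/A) with hgdef
    have hgderiv : ∀ u, s ≤ u → u ≤ t →
        HasDerivAt g (-W u * Real.exp ((u-s)/A)
          + η u * (Real.exp ((u-s)/A) * (1/A))) u := by
      intro u hsu hut
      have hu0 : (0:ℝ) < u := lt_of_lt_of_le hs0 hsu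
      have h1 : HasDerivAt η (-W u) u := FTCl hWc ht0 hu0
      have h2 : HasDerivAt (fun u => Real.exp ((u - s)/A))
          (Real.exp ((u-s)/A) * (1/A)) u := by
        have : HasDerivAt (fun u : ℝ => (u - s)/A) (1/A) u := by
          simpa using ((hasDerivAt_id u).sub_const s).div_const A
        exact this.exp
      exact h1.mul h2
    have hanti : AntitoneOn g (Set.Icc s t) := by
      apply antitoneOn_of_deriv_nonpos (convex_Icc s t)
      · intro u hu
        exact (hgderiv u hu.1 hu.2).continuousAt.continuousWithinAt
      · intro u hu
        rw [interior_Icc] at hu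
        exact (hgderiv u hu.1.le hu.2.le).differentiableAt.differentiableWithinAt
      · intro u hu
        rw [interior_Icc] at hu
        rw [(hgderiv u hu.1.le hu.2.le).deriv]
        have hηbd : η u ≤ A * W u := hbd u t (le_trans hs hu.1.le) hu.2.le
        have he : (0:ℝ) < Real.exp ((u-s)/A) := Real.exp_pos _
        have hW0 : (0:ℝ) < W u := Real.exp_pos _
        have : η u * (1/A) ≤ W u := by
          rw [mul_one_div, div_le_iff₀ hA0]
          linarith [hηbd]
        nlinarith
    have hg1 : g (t-1) ≤ g s :=
      hanti (Set.mem_Icc.2 ⟨le_rfl, by linarith⟩)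
        (Set.mem_Icc.2 ⟨by linarith, by linarith⟩) (by linarith)
    have hη1 : Real.exp (-E t - M) ≤ η (t-1) := by
      have hpt : ∀ τ ∈ Set.Icc (t-1) t, Real.exp (-E t - M) ≤ W τ := by
        intro τ hτ
        have hτ0 : (0:ℝ) < τ := by
          have : s ≤ t - 1 := by linarith
          linarith [hτ.1]
        have : E τ - E t ≤ M := by
          have h5 : E τ - E t = -(E t - E τ) := by ring
          rw [h5, hEdiff τ t hτ0.le ht0.le]
          have := myIntBound hM hτ0.le hτ.2
          nlinarith [abs_le.1 this, hM0, hτ.1]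
        rw [hWdef]
        exact Real.exp_le_exp.2 (by linarith)
      calc Real.exp (-E t - M) = ∫ τ in (t-1)..t, Real.exp (-E t - M) := by simp
        _ ≤ ∫ τ in (t-1)..t, W τ := by
            apply intervalIntegral.integral_mono_on (by linarith)
              intervalIntegrable_const
              (myIntIntP hWc (by linarith) ht0)
            exact hpt
    have hηs : η s ≤ A * W s := hbd s t hs hst
    have hchain : Real.exp (-E t - M) * Real.exp ((t-1-s)/A) ≤ A * W s := by
      calc Real.exp (-E t - M) * Real.exp ((t-1-s)/A)
          ≤ η (t-1) * Real.exp ((t-1-s)/A) :=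
            mul_le_mul_of_nonneg_right hη1 (Real.exp_nonneg _)
        _ = g (t-1) := rfl
        _ ≤ g s := hg1
        _ = η s := by
              show η s * Real.exp ((s-s)/A) = η s
              rw [sub_self, zero_div, Real.exp_zero, mul_one]
        _ ≤ A * W s := hηs
    have hexp : Real.exp (-E t - M + (t-1-s)/A)
        ≤ Real.exp (Real.log A + -E s) := by
      rw [Real.exp_add, Real.exp_add, Real.exp_log hA0]
      exact hchain
    have h6 := Real.exp_le_exp.1 hexp
    have h7 : (t-1-s)/A = (t-s)/A - 1/A := by ring
    rw [h7] at h6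
    linarith

lemma key {D v x : ℝ → ℝ} (hD : ContinuousOn D (Set.Ici 0)) {M : ℝ}
    (hM : ∀ u, 0 ≤ u → |D u| ≤ M)
    {K δ T : ℝ} (hδ : 0 < δ) (hT : 1 ≤ T)
    (hK : ∀ t, 0 ≤ t → |x t| ≤ K)
    (hvpos : ∀ t, T ≤ t → δ ≤ v t)
    (hx : ∀ t, 0 ≤ t → HasDerivAt x (D t * x t + v t) t) :
    (∃ C α T1, 0 < α ∧ 1 ≤ T1 ∧
      ∀ s t, T1 ≤ s → s ≤ t → (∫ τ in s..t, D τ) ≤ C - α * (t-s)) ∨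
    (∃ C α T1, 0 < α ∧ 1 ≤ T1 ∧
      ∀ s t, T1 ≤ s → s ≤ t → α * (t-s) - C ≤ ∫ τ in s..t, D τ) := by
  have hT0 : (0:ℝ) < T := lt_of_lt_of_le one_pos hT
  set E : ℝ → ℝ := fun t => ∫ u in (1:ℝ)..t, D u with hEdef
  set W : ℝ → ℝ := fun t => Real.exp (-E t) with hWdef
  set K' : ℝ := max K δ with hK'def
  set A : ℝ := K' / δ with hAdef
  have hK'δ : δ ≤ K' := le_max_right _ _
  have hA : 1 ≤ A := (le_div_iff₀ hδ).2 (by linarith)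
  have hA0 : (0:ℝ) < A := lt_of_lt_of_le one_pos hA
  have hK' : ∀ t, 0 ≤ t → |x t| ≤ K' := fun t ht => le_trans (hK t ht) (le_max_left _ _)
  have hWc : ContinuousOn W (Set.Ioi 0) := Wcont hD
  have hWpos : ∀ t, 0 < W t := fun t => Real.exp_pos _
  -- derivative of p = x * W
  set p : ℝ → ℝ := fun t => x t * W t with hpdef
  have hpd : ∀ t, T ≤ t → HasDerivAt p (v t * W t) t := by
    intro t ht
    have ht0 : (0:ℝ) < t := lt_of_lt_of_le hT0 ht
    have h1 := hx t ht0.le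
    have hEd : HasDerivAt E (D t) t := FTCr (hD.mono Set.Ioi_subset_Ici_self) one_pos ht0
    have h2 : HasDerivAt W (Real.exp (-E t) * -(D t)) t := hEd.neg.exp
    have h3 := h1.fun_mul h2
    refine h3.congr_deriv (Eq.symm ?_)
    show v t * W t = (D t * x t + v t) * W t + x t * (Real.exp (-E t) * -D t)
    rw [hWdef]; ring
  have hIW : ∀ a b : ℝ, 0 < a → 0 < b → IntervalIntegrable W MeasureTheory.volume a b :=
    fun a b ha hb => myIntIntP hWc ha hb
  have hWd : ∀ t, T ≤ t → HasDerivAt (fun u => ∫ τ in T..u, W τ) (W t) t :=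
    fun t ht => FTCr hWc hT0 (lt_of_lt_of_le hT0 ht)
  set q : ℝ → ℝ := fun t => p t - δ * ∫ τ in T..t, W τ with hqdef
  have hqd : ∀ t, T ≤ t → HasDerivAt q (v t * W t - δ * W t) t :=
    fun t ht => (hpd t ht).sub ((hWd t ht).const_mul δ)
  have hqmono : MonotoneOn q (Set.Ici T) := by
    apply monotoneOn_of_deriv_nonneg (convex_Ici T)
    · exact fun u hu => (hqd u hu).continuousAt.continuousWithinAt
    · intro u hu
      rw [interior_Ici] at hu
      exact (hqd u hu.le).differentiableAt.differentiableWithinAt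
    · intro u hu
      rw [interior_Ici] at hu
      rw [(hqd u hu.le).deriv]
      have := hvpos u hu.le
      nlinarith [hWpos u]
  have hpmono : MonotoneOn p (Set.Ici T) := by
    apply monotoneOn_of_deriv_nonneg (convex_Ici T)
    · exact fun u hu => (hpd u hu).continuousAt.continuousWithinAt
    · intro u hu
      rw [interior_Ici] at hu
      exact (hpd u hu.le).differentiableAt.differentiableWithinAt
    · intro u hu
      rw [interior_Ici] at hu
      rw [(hpd u hu.le).deriv]
      have := hvpos u hu.le
      nlinarith [hWpos u]
  have hkey : ∀ s t, T ≤ s → s ≤ t → δ * (∫ τ in s..t, W τ) ≤ p t - p s := by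
    intro s t hs hst
    have hs0 : (0:ℝ) < s := lt_of_lt_of_le hT0 hs
    have ht0 : (0:ℝ) < t := lt_of_lt_of_le hs0 hst
    have hq := hqmono (Set.mem_Ici.2 hs) (Set.mem_Ici.2 (le_trans hs hst)) hst
    have hsub : (∫ τ in T..t, W τ) - (∫ τ in T..s, W τ) = ∫ τ in s..t, W τ :=
      intervalIntegral.integral_interval_sub_left (hIW T t hT0 ht0) (hIW T s hT0 hs0)
    simp only [hqdef] at hq
    nlinarith [hsub]
  by_cases hcase : ∃ t1, T ≤ t1 ∧ 0 < p t1
  · obtain ⟨t1, ht1, hp1⟩ := hcase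
    left
    have hbd : ∀ s t, t1 ≤ s → s ≤ t →
        (∫ τ in s..t, Real.exp (-∫ u in (1:ℝ)..τ, D u))
          ≤ A * Real.exp (-∫ u in (1:ℝ)..t, D u) := by
      intro s t hs hst
      have hTs : T ≤ s := le_trans ht1 hs
      have hps : p t1 ≤ p s := hpmono (Set.mem_Ici.2 ht1) (Set.mem_Ici.2 hTs) hs
      have h1 := hkey s t hTs hst
      have ht0 : (0:ℝ) ≤ t := le_trans (le_trans hT0.le hTs) hst
      have h2 : p t ≤ K' * W t := by
        have hxt := (abs_le.1 (hK' t ht0)).2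
        have := hWpos t
        show x t * W t ≤ K' * W t
        nlinarith
      show (∫ τ in s..t, W τ) ≤ A * W t
      rw [hAdef, div_mul_eq_mul_div, le_div_iff₀ hδ]
      nlinarith
    refine ⟨Real.log A + M + 1/A, 1/A, t1, by positivity, le_trans hT ht1, ?_⟩
    intro s t hs hst
    have h8 := gronwallA hD hM hA (le_trans hT ht1) hbd s t hs hst
    have h7 : (t-s)/A = 1/A * (t-s) := by ring
    linarith
  · push_neg at hcase
    right
    have hbd : ∀ s t, T ≤ s → s ≤ t →
        (∫ τ in s..t, Real.exp (-∫ u in (1:ℝ)..τ, D u))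
          ≤ A * Real.exp (-∫ u in (1:ℝ)..s, D u) := by
      intro s t hs hst
      have hs0 : (0:ℝ) ≤ s := le_trans hT0.le hs
      have h1 := hkey s t hs hst
      have hpt : p t ≤ 0 := hcase t (le_trans hs hst)
      have h2 : -p s ≤ K' * W s := by
        have hxs := (abs_le.1 (hK' s hs0)).1
        have := hWpos s
        show -(x s * W s) ≤ K' * W s
        nlinarith
      show (∫ τ in s..t, W τ) ≤ A * W s
      rw [hAdef, div_mul_eq_mul_div, le_div_iff₀ hδ]
      nlinarith
    refine ⟨Real.log A + M + 1/A, 1/A, T, by positivity, hT, ?_⟩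
    intro s t hs hst
    have h8 := gronwallB hD hM hA hT hbd s t hs hst
    have h7 : (t-s)/A = 1/A * (t-s) := by ring
    linarith

lemma bohl_neBot : bohlFilter.NeBot := by
  have h : Tendsto (fun t : ℝ => ((0:ℝ), t)) atTop bohlFilter := by
    rw [bohlFilter]
    refine tendsto_inf.2 ⟨tendsto_comap_iff.2 ?_, tendsto_principal.2 ?_⟩
    · have : ((fun q : ℝ × ℝ => q.2 - q.1) ∘ fun t : ℝ => ((0:ℝ), t)) = fun t : ℝ => t - 0 :=
        rfl
      rw [this]
      simp only [sub_zero]; exact tendsto_id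
    · filter_upwards [eventually_gt_atTop (0:ℝ)] with t ht
      exact ⟨le_refl 0, ht⟩
  exact Filter.neBot_of_le h

lemma bohl_eventually_mem : ∀ᶠ q : ℝ × ℝ in bohlFilter, 0 ≤ q.1 ∧ q.1 < q.2 :=
  mem_inf_of_right (mem_principal_self _)

lemma bohl_eventually_len (L : ℝ) : ∀ᶠ q : ℝ × ℝ in bohlFilter, L ≤ q.2 - q.1 :=
  mem_inf_of_left (preimage_mem_comap (Ici_mem_atTop L))

lemma bohl_avg_bdd {D : ℝ → ℝ} {M : ℝ} (hM : ∀ u, 0 ≤ u → |D u| ≤ M) :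
    ∀ᶠ q : ℝ × ℝ in bohlFilter, |bohlAvg D q| ≤ M := by
  filter_upwards [bohl_eventually_mem] with q hq
  have hpos : 0 < q.2 - q.1 := sub_pos.2 hq.2
  have h := myIntBound hM hq.1 hq.2.le
  unfold bohlAvg
  rw [abs_mul, abs_inv, abs_of_pos hpos]
  calc (q.2 - q.1)⁻¹ * |∫ τ in q.1..q.2, D τ|
      ≤ (q.2 - q.1)⁻¹ * (M * (q.2 - q.1)) :=
        mul_le_mul_of_nonneg_left h (inv_nonneg.2 hpos.le)
    _ = M := by field_simp

lemma bohlUpper_lt {D : ℝ → ℝ} {M C α T1 : ℝ} (hD : ContinuousOn D (Set.Ici 0))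
    (hM : ∀ u, 0 ≤ u → |D u| ≤ M) (hα : 0 < α) (hT1 : 1 ≤ T1)
    (hC : ∀ s t, T1 ≤ s → s ≤ t → (∫ τ in s..t, D τ) ≤ C - α * (t - s)) :
    bohlUpper D < 0 := by
  have hM0 : 0 ≤ M := le_trans (abs_nonneg _) (hM 0 le_rfl)
  have hT10 : (0:ℝ) ≤ T1 := le_trans zero_le_one hT1
  set C' : ℝ := |C| + M * T1 + α * T1 with hC'def
  have hC' : ∀ s t, 0 ≤ s → s ≤ t → (∫ τ in s..t, D τ) ≤ C' - α * (t - s) := by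
    intro s t hs hst
    by_cases h1 : T1 ≤ s
    · have := hC s t h1 hst
      have h2 : C ≤ |C| := le_abs_self C
      nlinarith
    · push_neg at h1
      by_cases h2 : t ≤ T1
      · have hb := abs_le.1 (myIntBound hM hs hst)
        have h3 : t - s ≤ T1 := by linarith
        nlinarith [abs_nonneg C]
      · push_neg at h2
        have hadd : (∫ τ in s..T1, D τ) + (∫ τ in T1..t, D τ) = ∫ τ in s..t, D τ :=
          intervalIntegral.integral_add_adjacent_intervals
            (myIntInt hD hs hT10) (myIntInt hD hT10 (by linarith))
        have hb1 := abs_le.1 (myIntBound hM hs h1.le)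
        have hb2 := hC T1 t le_rfl h2.le
        nlinarith [abs_nonneg C, le_abs_self C]
  have hev : ∀ᶠ q : ℝ × ℝ in bohlFilter, bohlAvg D q ≤ -(α/2) := by
    filter_upwards [bohl_eventually_mem,
      bohl_eventually_len (2 * |C'| / α + 1)] with q hq hL
    obtain ⟨hq1, hq2⟩ := hq
    have hpos : 0 < q.2 - q.1 := sub_pos.2 hq2
    have hint := hC' q.1 q.2 hq1 hq2.le
    have step : bohlAvg D q ≤ (q.2 - q.1)⁻¹ * (C' - α * (q.2 - q.1)) :=
      mul_le_mul_of_nonneg_left hint (inv_nonneg.2 hpos.le)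
    have heq : (q.2 - q.1)⁻¹ * (C' - α * (q.2 - q.1)) = C' / (q.2 - q.1) - α := by
      field_simp
    have h3 : 2 * |C'| ≤ α * (q.2 - q.1) := by
      have h4 : 2 * |C'| / α ≤ q.2 - q.1 := by linarith
      calc 2 * |C'| = (2 * |C'| / α) * α := by field_simp
        _ ≤ (q.2 - q.1) * α := mul_le_mul_of_nonneg_right h4 hα.le
        _ = α * (q.2 - q.1) := mul_comm _ _
    have h5 : C' / (q.2 - q.1) ≤ α / 2 := by
      rw [div_le_iff₀ hpos]
      nlinarith [le_abs_self C']
    linarith [heq ▸ step]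
  haveI := bohl_neBot
  have hbd : ∀ᶠ q : ℝ × ℝ in bohlFilter, -M ≤ bohlAvg D q := by
    filter_upwards [bohl_avg_bdd hM] with q hq
    linarith [(abs_le.1 hq).1]
  have := Filter.limsup_le_of_le
    (Filter.isCoboundedUnder_le_of_eventually_le _ hbd) hev
  calc bohlUpper D ≤ -(α/2) := this
    _ < 0 := by linarith

lemma bohlLower_gt {D : ℝ → ℝ} {M C α T1 : ℝ} (hD : ContinuousOn D (Set.Ici 0))
    (hM : ∀ u, 0 ≤ u → |D u| ≤ M) (hα : 0 < α) (hT1 : 1 ≤ T1)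
    (hC : ∀ s t, T1 ≤ s → s ≤ t → α * (t - s) - C ≤ ∫ τ in s..t, D τ) :
    0 < bohlLower D := by
  have hM0 : 0 ≤ M := le_trans (abs_nonneg _) (hM 0 le_rfl)
  have hT10 : (0:ℝ) ≤ T1 := le_trans zero_le_one hT1
  set C' : ℝ := |C| + M * T1 + α * T1 with hC'def
  have hC' : ∀ s t, 0 ≤ s → s ≤ t → α * (t - s) - C' ≤ ∫ τ in s..t, D τ := by
    intro s t hs hst
    by_cases h1 : T1 ≤ s
    · have := hC s t h1 hst
      have h2 : C ≤ |C| := le_abs_self C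
      nlinarith
    · push_neg at h1
      by_cases h2 : t ≤ T1
      · have hb := abs_le.1 (myIntBound hM hs hst)
        have h3 : t - s ≤ T1 := by linarith
        nlinarith [abs_nonneg C]
      · push_neg at h2
        have hadd : (∫ τ in s..T1, D τ) + (∫ τ in T1..t, D τ) = ∫ τ in s..t, D τ :=
          intervalIntegral.integral_add_adjacent_intervals
            (myIntInt hD hs hT10) (myIntInt hD hT10 (by linarith))
        have hb1 := abs_le.1 (myIntBound hM hs h1.le)
        have hb2 := hC T1 t le_rfl h2.le
        nlinarith [abs_nonneg C, le_abs_self C]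
  have hev : ∀ᶠ q : ℝ × ℝ in bohlFilter, α/2 ≤ bohlAvg D q := by
    filter_upwards [bohl_eventually_mem,
      bohl_eventually_len (2 * |C'| / α + 1)] with q hq hL
    obtain ⟨hq1, hq2⟩ := hq
    have hpos : 0 < q.2 - q.1 := sub_pos.2 hq2
    have hint := hC' q.1 q.2 hq1 hq2.le
    have step : (q.2 - q.1)⁻¹ * (α * (q.2 - q.1) - C') ≤ bohlAvg D q :=
      mul_le_mul_of_nonneg_left hint (inv_nonneg.2 hpos.le)
    have heq : (q.2 - q.1)⁻¹ * (α * (q.2 - q.1) - C') = α - C' / (q.2 - q.1) := by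
      field_simp
    have h3 : 2 * |C'| ≤ α * (q.2 - q.1) := by
      have h4 : 2 * |C'| / α ≤ q.2 - q.1 := by linarith
      calc 2 * |C'| = (2 * |C'| / α) * α := by field_simp
        _ ≤ (q.2 - q.1) * α := mul_le_mul_of_nonneg_right h4 hα.le
        _ = α * (q.2 - q.1) := mul_comm _ _
    have h5 : C' / (q.2 - q.1) ≤ α / 2 := by
      rw [div_le_iff₀ hpos]
      nlinarith [le_abs_self C']
    linarith [heq ▸ step]
  haveI := bohl_neBot
  have hbd : ∀ᶠ q : ℝ × ℝ in bohlFilter, bohlAvg D q ≤ M := by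
    filter_upwards [bohl_avg_bdd hM] with q hq
    linarith [(abs_le.1 hq).2]
  have := Filter.le_liminf_of_le
    (Filter.isCoboundedUnder_ge_of_eventually_le _ hbd) hev
  calc (0:ℝ) < α/2 := by linarith
    _ ≤ bohlLower D := this

lemma signConst (v : ℝ → ℝ) (hv_cont : ContinuousOn v (Set.Ici 0))
    (hv_inf : 0 < Filter.liminf (fun t => |v t|) Filter.atTop) :
    ∃ δ T, 0 < δ ∧ 1 ≤ T ∧
      ((∀ t, T ≤ t → δ ≤ v t) ∨ (∀ t, T ≤ t → δ ≤ -v t)) := by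
  set δ := Filter.liminf (fun t => |v t|) Filter.atTop / 2 with hδdef
  have hδ : 0 < δ := by positivity
  have hev : ∀ᶠ t in atTop, δ < |v t| := by
    exact Filter.eventually_lt_of_lt_liminf (by linarith)
      ⟨0, Filter.eventually_map.2 (Filter.Eventually.of_forall (fun t => abs_nonneg (v t)))⟩
  obtain ⟨T0, hT0⟩ := Filter.eventually_atTop.1 hev
  set T := max T0 1 with hTdef
  have hT1 : (1:ℝ) ≤ T := le_max_right _ _
  have hTv : ∀ t, T ≤ t → δ < |v t| := fun t ht => hT0 t (le_trans (le_max_left _ _) ht)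
  have hT0pos : (0:ℝ) ≤ T := le_trans zero_le_one hT1
  have hsign : ∀ t, T ≤ t → v t ≠ 0 := by
    intro t ht h0
    have h3 := hTv t ht
    rw [h0, abs_zero] at h3
    linarith
  have hIVT : ∀ t, T ≤ t → ¬ (v T < 0 ∧ 0 < v t) ∧ ¬ (v t < 0 ∧ 0 < v T) := by
    intro t ht
    have hcont : ContinuousOn v (Set.Icc T t) :=
      hv_cont.mono (fun u hu => le_trans hT0pos hu.1)
    constructor
    · rintro ⟨ha, hb⟩
      obtain ⟨c, hc, hc0⟩ := intermediate_value_Icc ht hcont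
        (Set.mem_Icc.2 ⟨ha.le, hb.le⟩)
      exact hsign c hc.1 hc0
    · rintro ⟨ha, hb⟩
      obtain ⟨c, hc, hc0⟩ := intermediate_value_Icc' ht hcont
        (Set.mem_Icc.2 ⟨ha.le, hb.le⟩)
      exact hsign c hc.1 hc0
  refine ⟨δ, T, hδ, hT1, ?_⟩
  by_cases hvT : 0 < v T
  · left
    intro t ht
    rcases lt_abs.1 (hTv t ht) with h | h
    · linarith
    · exfalso
      exact (hIVT t ht).2 ⟨by linarith, hvT⟩
  · right
    have hvT' : v T < 0 := lt_of_le_of_ne (not_lt.1 hvT) (hsign T le_rfl)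
    intro t ht
    rcases lt_abs.1 (hTv t ht) with h | h
    · exfalso
      exact (hIVT t ht).1 ⟨hvT', by linarith⟩
    · linarith

/-- If `0 ∈ [β⁻(D), β⁺(D)]` (no exponential dichotomy) and `liminf |v t| > 0`, then
the inhomogeneous equation `x' = D t * x + v t` has no bounded solution on `[0,∞)`. -/
theorem no_dichotomy_no_bounded_solution (D : ℝ → ℝ)
    (hD_cont : ContinuousOn D (Set.Ici 0)) (hD_bdd : ∃ M, ∀ t, 0 ≤ t → |D t| ≤ M)
    (h1 : bohlLower D ≤ 0) (h2 : 0 ≤ bohlUpper D)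
    (v : ℝ → ℝ) (hv_cont : ContinuousOn v (Set.Ici 0))
    (hv_bdd : ∃ M, ∀ t, 0 ≤ t → |v t| ≤ M)
    (hv_inf : 0 < Filter.liminf (fun t => |v t|) Filter.atTop)
    (x : ℝ → ℝ) (hx : ∀ t, 0 ≤ t → HasDerivAt x (D t * x t + v t) t) :
    ∀ M : ℝ, ∃ t, 0 ≤ t ∧ M < |x t| := by
  by_contra hcon
  push_neg at hcon
  obtain ⟨K, hK⟩ := hcon
  obtain ⟨M, hM⟩ := hD_bdd
  obtain ⟨δ, T, hδ, hT, hsign⟩ := signConst v hv_cont hv_inf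
  have hk : (∃ C α T1, 0 < α ∧ 1 ≤ T1 ∧
      ∀ s t, T1 ≤ s → s ≤ t → (∫ τ in s..t, D τ) ≤ C - α * (t-s)) ∨
    (∃ C α T1, 0 < α ∧ 1 ≤ T1 ∧
      ∀ s t, T1 ≤ s → s ≤ t → α * (t-s) - C ≤ ∫ τ in s..t, D τ) := by
    rcases hsign with hpos | hneg
    · exact key hD_cont hM hδ hT hK hpos hx
    · have hx' : ∀ t, 0 ≤ t →
          HasDerivAt (fun u => -x u) (D t * (-(x t)) + (-(v t))) t := by
        intro t ht
        have h5 := (hx t ht).fun_neg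
        exact h5.congr_deriv (by ring)
      have hK' : ∀ t, 0 ≤ t → |(fun u => -x u) t| ≤ K := by
        intro t ht
        simpa [abs_neg] using hK t ht
      exact key (v := fun u => -v u) (x := fun u => -x u) hD_cont hM hδ hT hK' hneg hx'
  rcases hk with ⟨C, α, T1, hα, hT1, hC⟩ | ⟨C, α, T1, hα, hT1, hC⟩
  · exact absurd h2 (not_le.2 (bohlUpper_lt hD_cont hM hα hT1 hC))
  · exact absurd h1 (not_le.2 (bohlLower_gt hD_cont hM hα hT1 hC))
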